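/- Let r be a natural number and let t : Fin r → ℕ be a family of positive integers, regarded as a multiset T of parts. Then in ℤ⟦X⟧, for every natural number s, the coefficient of X^s in (1 - X)⁻¹ * ∏_{i : Fin r} (1 - X^(t i))⁻¹ equals ∑_{n=0}^{s} P_T(n), the total number of partitions of all integers n with 0 ≤ n ≤ s into parts from the multiset T. -/

import Mathlib

open PowerSeries Finset

/-- The geometric-type series `∑_{k ∣ n} X^n` for divisibility by `k`. -/
noncomputable def indSeries (k : ℕ) : ℤ⟦X⟧ :=
  PowerSeries.mk fun n => if k ∣ n then 1 else 0

lemma one_sub_pow_mul_indSeries (k : ℕ) (hk : 1 ≤ k) :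
    (1 - (X : ℤ⟦X⟧) ^ k) * indSeries k = 1 := by
  ext n
  rw [sub_mul, one_mul, map_sub, coeff_X_pow_mul', coeff_one]
  simp only [indSeries, coeff_mk]
  rcases Nat.eq_zero_or_pos n with rfl | hn
  · have : ¬ k ≤ 0 := by omega
    simp [this]
  rcases Nat.lt_or_ge n k with hlt | hge
  · have h1 : ¬ k ∣ n := fun hd => absurd (Nat.le_of_dvd hn hd) (by omega)
    simp [h1, Nat.not_le.mpr hlt, hn.ne']
  · have hiff : k ∣ n ↔ k ∣ n - k := by
      constructor
      · exact fun h => Nat.dvd_sub h dvd_rfl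
      · intro hd
        have := Nat.dvd_add hd (dvd_refl k)
        rwa [Nat.sub_add_cancel hge] at this
    by_cases h : k ∣ n
    · simp [h, hge, hiff.mp h, hn.ne']
    · have h2 : ¬ k ∣ n - k := fun hd => h (hiff.mpr hd)
      simp [h, hge, h2, hn.ne']

lemma ring_inverse_eq_indSeries (k : ℕ) (hk : 1 ≤ k) :
    Ring.inverse (1 - (X : ℤ⟦X⟧) ^ k) = indSeries k := by
  have h := one_sub_pow_mul_indSeries k hk
  have hu : IsUnit (1 - (X : ℤ⟦X⟧) ^ k) := IsUnit.of_mul_eq_one _ h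
  have h2 : Ring.inverse (1 - (X : ℤ⟦X⟧) ^ k) =
      Ring.inverse (1 - (X : ℤ⟦X⟧) ^ k) * ((1 - (X : ℤ⟦X⟧) ^ k) * indSeries k) := by
    rw [h, mul_one]
  rwa [← mul_assoc, Ring.inverse_mul_cancel _ hu, one_mul] at h2

lemma coeff_prod_indSeries (r : ℕ) (t : Fin r → ℕ) (ht : ∀ i, 1 ≤ t i) (n : ℕ) :
    PowerSeries.coeff (R := ℤ) n (∏ i : Fin r, indSeries (t i))
      = (Nat.card {a : Fin r → ℕ | ∑ i, a i * t i = n} : ℤ) := by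
  classical
  rw [PowerSeries.coeff_prod]
  have step1 : (∑ l ∈ finsuppAntidiag (univ : Finset (Fin r)) n,
        ∏ i : Fin r, PowerSeries.coeff (R := ℤ) (l i) (indSeries (t i)))
      = ∑ l ∈ finsuppAntidiag (univ : Finset (Fin r)) n,
          if ∀ i ∈ (univ : Finset (Fin r)), t i ∣ l i then (1 : ℤ) else 0 :=
    Finset.sum_congr rfl fun l _ => by
      simp only [indSeries, coeff_mk]
      refine (Finset.prod_boole (M₀ := ℤ) (p := fun i => t i ∣ l i)).trans ?_
      congr!
  rw [step1, @Finset.sum_boole (Fin r →₀ ℕ) ℤ _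
    (fun l => ∀ i ∈ (univ : Finset (Fin r)), t i ∣ l i) _
    (finsuppAntidiag (univ : Finset (Fin r)) n)]
  congr 1
  have e : {a : Fin r → ℕ // ∑ i, a i * t i = n} ≃
      {l : (Fin r →₀ ℕ) // l ∈ (finsuppAntidiag (univ : Finset (Fin r)) n).filter
        (fun l => ∀ i ∈ univ, t i ∣ l i)} := by
    refine ⟨fun a => ⟨Finsupp.equivFunOnFinite.symm (fun i => a.1 i * t i), ?_⟩,
      fun l => ⟨fun i => l.1 i / t i, ?_⟩, ?_, ?_⟩
    · simp only [mem_filter, mem_finsuppAntidiag]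
      refine ⟨⟨?_, subset_univ _⟩, fun i _ => ?_⟩
      · simpa only [Finsupp.coe_equivFunOnFinite_symm] using a.2
      · simp only [Finsupp.coe_equivFunOnFinite_symm]
        exact dvd_mul_left _ _
    · have hl := l.2
      simp only [mem_filter, mem_finsuppAntidiag, mem_univ, forall_true_left] at hl
      obtain ⟨⟨hsum, -⟩, hdvd⟩ := hl
      have : ∀ i, l.1 i / t i * t i = l.1 i := fun i => Nat.div_mul_cancel (hdvd i)
      simp only [this]
      exact hsum
    · intro a
      ext i
      simp [Nat.mul_div_cancel _ (Nat.lt_of_lt_of_le Nat.zero_lt_one (ht i))]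
    · intro l
      have hl := l.2
      simp only [mem_filter, mem_finsuppAntidiag, mem_univ, forall_true_left] at hl
      apply Subtype.ext
      apply Finsupp.ext
      intro i
      simp [Nat.div_mul_cancel (hl.2 i)]
  have : Nat.card {a : Fin r → ℕ | ∑ i, a i * t i = n} =
      ((finsuppAntidiag (univ : Finset (Fin r)) n).filter (fun l => ∀ i ∈ univ, t i ∣ l i)).card := by
    exact (Nat.card_congr ((Equiv.subtypeEquivRight (fun a => Iff.rfl)).trans e)).trans
      (Nat.card_eq_finsetCard _)
  rw [this]

theorem coeff_cumulative_partition_gf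
    (r : ℕ) (t : Fin r → ℕ) (ht : ∀ i, 1 ≤ t i) (s : ℕ) :
    PowerSeries.coeff (R := ℤ) s
        (Ring.inverse (1 - (X : ℤ⟦X⟧)) * ∏ i : Fin r, Ring.inverse (1 - (X : ℤ⟦X⟧) ^ (t i)))
      = (∑ n ∈ Finset.range (s + 1),
          (Nat.card {a : Fin r → ℕ | ∑ i, a i * t i = n} : ℤ)) := by
  have h1 : Ring.inverse (1 - (X : ℤ⟦X⟧)) = indSeries 1 := by
    have := ring_inverse_eq_indSeries 1 le_rfl
    rwa [pow_one] at this
  rw [h1, Finset.prod_congr rfl (fun i _ => ring_inverse_eq_indSeries (t i) (ht i)),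
    PowerSeries.coeff_mul]
  have hcoeff1 : ∀ m : ℕ, PowerSeries.coeff (R := ℤ) m (indSeries 1) = 1 := by
    intro m; simp [indSeries]
  rw [Finset.Nat.sum_antidiagonal_eq_sum_range_succ
    (f := fun a b => PowerSeries.coeff (R := ℤ) a (indSeries 1) *
      PowerSeries.coeff (R := ℤ) b (∏ i : Fin r, indSeries (t i)))]
  simp only [hcoeff1, one_mul]
  rw [← Finset.sum_range_reflect]
  refine Finset.sum_congr rfl fun n hn => ?_
  rw [Finset.mem_range] at hn
  have h2 : s + 1 - 1 - n = s - n := by omega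
  have h3 : s - (s - n) = n := by omega
  rw [h2, h3, coeff_prod_indSeries r t ht]
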